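/- A real flat ETF is Hadamard if and only if it has a real flat Naimark complement; a complex flat ETF is complex Hadamard if and only if it has a flat Naimark complement. -/

import Mathlib

open Matrix

lemma key {𝕜 : Type*} [Field 𝕜] [StarRing 𝕜] (P : 𝕜 → Prop) (d n : ℕ) (hdn : d < n)
    (Φ : Matrix (Fin d) (Fin n) 𝕜) (hflat : ∀ i j, P (Φ i j))
    (hΦ : Φ * Φ.conjTranspose = (n : 𝕜) • 1) :
    (∃ (H : Matrix (Fin n) (Fin n) 𝕜) (f : Fin d → Fin n),
        (∀ i j, P (H i j)) ∧ H * H.conjTranspose = (n : 𝕜) • 1 ∧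
        Function.Injective f ∧ (∀ i j, Φ i j = H (f i) j)) ↔
      (∃ Φt : Matrix (Fin (n - d)) (Fin n) 𝕜,
        (∀ i j, P (Φt i j)) ∧
        Φ * Φt.conjTranspose = 0 ∧ Φt * Φt.conjTranspose = (n : 𝕜) • 1) := by
  constructor
  · rintro ⟨H, f, hHflat, hH, hf, hΦH⟩
    set s : Finset (Fin n) := Finset.univ \ Finset.image f Finset.univ with hs
    have hcard : s.card = n - d := by
      rw [hs, Finset.card_sdiff_of_subset (Finset.subset_univ _),
        Finset.card_image_of_injective _ hf]
      simp
    set e := s.equivFinOfCardEq hcard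
    set g : Fin (n - d) → Fin n := fun i => (e.symm i : Fin n) with hg
    have hginj : Function.Injective g := by
      intro a b hab
      simpa using e.symm.injective (Subtype.ext hab)
    have hgf : ∀ i i', g i ≠ f i' := by
      intro i i' hcontra
      have hmem : g i ∈ s := (e.symm i).2
      rw [hs] at hmem
      simp only [Finset.mem_sdiff, Finset.mem_image] at hmem
      exact hmem.2 ⟨i', Finset.mem_univ _, hcontra.symm⟩
    have hΦeq : Φ = H.submatrix f id := by
      ext i j; simp [hΦH]
    refine ⟨H.submatrix g id, fun i j => hHflat _ _, ?_, ?_⟩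
    · rw [hΦeq]
      have : (H.submatrix g id).conjTranspose
          = H.conjTranspose.submatrix (⇑(Equiv.refl (Fin n))) g := by
        ext i j; simp
      have h0 : H.submatrix f id = H.submatrix f ⇑(Equiv.refl (Fin n)) := rfl
      rw [this, h0, Matrix.submatrix_mul_equiv H H.conjTranspose f (Equiv.refl (Fin n)) g, hH]
      ext i j
      simp [Matrix.one_apply_ne ((hgf j i).symm)]
    · have : (H.submatrix g id).conjTranspose
          = H.conjTranspose.submatrix (⇑(Equiv.refl (Fin n))) g := by
        ext i j; simp
      have h0 : H.submatrix g id = H.submatrix g ⇑(Equiv.refl (Fin n)) := rfl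
      rw [this, h0, Matrix.submatrix_mul_equiv H H.conjTranspose g (Equiv.refl (Fin n)) g, hH]
      ext i j
      simp [Matrix.one_apply, hginj.eq_iff]
  · rintro ⟨Φt, htflat, horth, hΦt⟩
    have hnd : d + (n - d) = n := Nat.add_sub_cancel' hdn.le
    set e : Fin d ⊕ Fin (n - d) ≃ Fin n := finSumFinEquiv.trans (finCongr hnd) with he
    set M : Matrix (Fin d ⊕ Fin (n - d)) (Fin n) 𝕜 := Matrix.fromRows Φ Φt with hM
    refine ⟨M.submatrix e.symm id, fun i => e (Sum.inl i), ?_, ?_, ?_, ?_⟩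
    · intro i j
      rcases h : e.symm i with a | a <;>
        simp only [Matrix.submatrix_apply, hM, h, id, Matrix.fromRows_apply_inl,
          Matrix.fromRows_apply_inr]
      · exact hflat a j
      · exact htflat a j
    · have h1 : (M.submatrix e.symm id).conjTranspose
          = M.conjTranspose.submatrix (⇑(Equiv.refl (Fin n))) e.symm := by
        ext i j; simp
      have h0 : M.submatrix ⇑e.symm id = M.submatrix ⇑e.symm ⇑(Equiv.refl (Fin n)) := rfl
      rw [h1, h0, Matrix.submatrix_mul_equiv M M.conjTranspose e.symm (Equiv.refl (Fin n)) e.symm]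
      have h2 : M * M.conjTranspose = (n : 𝕜) • 1 := by
        rw [hM, Matrix.conjTranspose_fromRows_eq_fromCols_conjTranspose,
          Matrix.fromRows_mul_fromCols, hΦ, hΦt, horth]
        have horth' : Φt * Φ.conjTranspose = 0 := by
          have := congrArg Matrix.conjTranspose horth
          simpa using this
        rw [horth']
        ext (i | i) (j | j) <;>
          simp [Matrix.fromBlocks, Matrix.one_apply, Matrix.smul_apply]
      rw [h2]
      ext i j
      simp [Matrix.one_apply, e.symm.injective.eq_iff]
    · exact fun a b hab => Sum.inl.inj (e.injective hab)
    · intro i j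
      simp [hM]



/-- A real flat ETF is Hadamard iff it has a real flat Naimark complement, and a complex flat
ETF is complex Hadamard iff it has a flat Naimark complement.  Here a `d × n` flat ETF `Φ`
(entries of modulus one, `Φ Φ* = n • 1`, equiangular) is (complex) Hadamard when it occurs as
`d` rows of an `n × n` (complex) Hadamard matrix, and a Naimark complement is an
`(n−d) × n` matrix `Φ̃` with `Φ Φ̃* = 0` and `Φ̃ Φ̃* = n • 1`. -/
theorem flat_etf_hadamard_iff_flat_naimark :
    (∀ (d n : ℕ), 0 < d → d < n →
      ∀ Φ : Matrix (Fin d) (Fin n) ℝ,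
        (∀ i j, Φ i j = 1 ∨ Φ i j = -1) →
        Φ * Φ.transpose = (n : ℝ) • 1 →
        (∃ γ : ℝ, ∀ j j', j ≠ j' → |∑ i, Φ i j * Φ i j'| = γ) →
        ((∃ (H : Matrix (Fin n) (Fin n) ℝ) (f : Fin d → Fin n),
            (∀ i j, H i j = 1 ∨ H i j = -1) ∧ H * H.transpose = (n : ℝ) • 1 ∧
            Function.Injective f ∧ (∀ i j, Φ i j = H (f i) j)) ↔
          (∃ Φt : Matrix (Fin (n - d)) (Fin n) ℝ,
            (∀ i j, Φt i j = 1 ∨ Φt i j = -1) ∧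
            Φ * Φt.transpose = 0 ∧ Φt * Φt.transpose = (n : ℝ) • 1))) ∧
    (∀ (d n : ℕ), 0 < d → d < n →
      ∀ Φ : Matrix (Fin d) (Fin n) ℂ,
        (∀ i j, ‖Φ i j‖ = 1) →
        Φ * Φ.conjTranspose = (n : ℂ) • 1 →
        (∃ γ : ℝ, ∀ j j', j ≠ j' → ‖∑ i, (starRingEnd ℂ) (Φ i j) * Φ i j'‖ = γ) →
        ((∃ (H : Matrix (Fin n) (Fin n) ℂ) (f : Fin d → Fin n),
            (∀ i j, ‖H i j‖ = 1) ∧ H * H.conjTranspose = (n : ℂ) • 1 ∧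
            Function.Injective f ∧ (∀ i j, Φ i j = H (f i) j)) ↔
          (∃ Φt : Matrix (Fin (n - d)) (Fin n) ℂ,
            (∀ i j, ‖Φt i j‖ = 1) ∧
            Φ * Φt.conjTranspose = 0 ∧ Φt * Φt.conjTranspose = (n : ℂ) • 1))) := by
  constructor
  · intro d n _hd hdn Φ hflat hΦ _
    have h := key (fun x : ℝ => x = 1 ∨ x = -1) d n hdn Φ hflat
      (by rw [Matrix.conjTranspose_eq_transpose_of_trivial]; exact hΦ)
    simpa only [Matrix.conjTranspose_eq_transpose_of_trivial] using h
  · intro d n _hd hdn Φ hflat hΦ _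
    exact key (fun x : ℂ => ‖x‖ = 1) d n hdn Φ hflat hΦ
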